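/- The misère monoid of the set of normal-play canonical-form integers is isomorphic to (Z, +): the map sending the game n to the integer n is an isomorphism of the quotient monoid under misère equivalence modulo integers, with outcome partition N^- = {0}, L^- = negative integers, R^- = positive integers, and total ordering n ≧ m (mod integers) iff n ≤ m as integers. -/

import Mathlib

universe u

namespace SetTheory

/-- Ported verbatim (in substance) from Mathlib (Dec 2024), `Mathlib/SetTheory/Game/PGame.lean`,
which has since been removed from Mathlib. -/
inductive PGame : Type (u + 1)
  | mk : ∀ α β : Type u, (α → PGame) → (β → PGame) → PGame

namespace PGame

def LeftMoves : PGame → Type u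
  | mk l _ _ _ => l

def RightMoves : PGame → Type u
  | mk _ r _ _ => r

def moveLeft : ∀ g : PGame, LeftMoves g → PGame
  | mk _l _ L _ => L

def moveRight : ∀ g : PGame, RightMoves g → PGame
  | mk _ _r _ R => R

inductive IsOption : PGame → PGame → Prop
  | moveLeft {x : PGame} (i : x.LeftMoves) : IsOption (x.moveLeft i) x
  | moveRight {x : PGame} (i : x.RightMoves) : IsOption (x.moveRight i) x

instance : Zero PGame :=
  ⟨⟨PEmpty, PEmpty, PEmpty.elim, PEmpty.elim⟩⟩

def neg : PGame → PGame
  | ⟨l, r, L, R⟩ => ⟨r, l, fun i => neg (R i), fun i => neg (L i)⟩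

instance : Neg PGame :=
  ⟨neg⟩

noncomputable instance : Add PGame.{u} :=
  ⟨fun x y => by
    induction x generalizing y with | mk xl xr _ _ IHxl IHxr => _
    induction y with | mk yl yr yL yR IHyl IHyr => _
    have y := mk yl yr yL yR
    refine ⟨xl ⊕ yl, xr ⊕ yr, Sum.rec ?_ ?_, Sum.rec ?_ ?_⟩
    · exact fun i => IHxl i y
    · exact IHyl
    · exact fun i => IHxr i y
    · exact IHyr⟩

end PGame

end SetTheory


open SetTheory

namespace Misere

/-- `F` is a follower of `G`: reachable from `G` by a (possibly empty) sequence of moves. -/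
def Follower (F G : PGame) : Prop := Relation.ReflTransGen PGame.IsOption F G

def IsLeftEnd (G : PGame) : Prop := IsEmpty G.LeftMoves
def IsRightEnd (G : PGame) : Prop := IsEmpty G.RightMoves

/-- A dead left end: every follower (including itself) is a left end. -/
def DeadLeftEnd (G : PGame) : Prop := ∀ F, Follower F G → IsLeftEnd F
def DeadRightEnd (G : PGame) : Prop := ∀ F, Follower F G → IsRightEnd F
def DeadEnd (G : PGame) : Prop := DeadLeftEnd G ∨ DeadRightEnd G

/-- A game is dead-ending if every end follower is a dead end. -/
def DeadEnding (G : PGame) : Prop :=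
  ∀ F, Follower F G → (IsLeftEnd F → DeadLeftEnd F) ∧ (IsRightEnd F → DeadRightEnd F)

/-- The universe of dead-ending games. -/
def E : Set PGame := {G | DeadEnding G}

/-- `(misereWins G).1` : Left, moving first, wins `G` under misère play;
    `(misereWins G).2` : Right, moving first, wins `G` under misère play. -/
def misereWins : PGame → Prop × Prop
  | PGame.mk l r L R =>
      (IsEmpty l ∨ ∃ i, ¬ (misereWins (L i)).2,
       IsEmpty r ∨ ∃ j, ¬ (misereWins (R j)).1)

def LeftWinsGF (G : PGame) : Prop := (misereWins G).1
def RightWinsGF (G : PGame) : Prop := (misereWins G).2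

inductive MOutcome : Type
  | L | N | P | R
deriving DecidableEq

/-- Partial order on misère outcomes: `R` minimal, `L` maximal, `N` and `P` incomparable. -/
def MOutcome.le : MOutcome → MOutcome → Prop
  | .R, _ => True
  | _, .L => True
  | a, b => a = b

instance : LE MOutcome := ⟨MOutcome.le⟩

/-- The misère outcome of a game. -/
noncomputable def outcome (G : PGame) : MOutcome := by
  classical
  exact if LeftWinsGF G then (if RightWinsGF G then .N else .L)
        else (if RightWinsGF G then .R else .P)

/-- `G ≡ H (mod U)`. -/
def equivMod (U : Set PGame) (G H : PGame) : Prop :=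
  ∀ X ∈ U, outcome (G + X) = outcome (H + X)

/-- `G ≧ H (mod U)`. -/
def geMod (U : Set PGame) (G H : PGame) : Prop :=
  ∀ X ∈ U, outcome (H + X) ≤ outcome (G + X)

/-- `LeftChain G n`: there is a sequence of `n` consecutive Left moves from `G`
ending at the zero position. -/
inductive LeftChain : PGame → ℕ → Prop
  | zero (G : PGame) : IsLeftEnd G → IsRightEnd G → LeftChain G 0
  | succ (G : PGame) (i : G.LeftMoves) (n : ℕ) :
      LeftChain (G.moveLeft i) n → LeftChain G (n + 1)

inductive RightChain : PGame → ℕ → Prop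
  | zero (G : PGame) : IsLeftEnd G → IsRightEnd G → RightChain G 0
  | succ (G : PGame) (j : G.RightMoves) (n : ℕ) :
      RightChain (G.moveRight j) n → RightChain G (n + 1)

/-- Left-length: minimum number of consecutive Left moves needed to reach zero. -/
noncomputable def leftLength (G : PGame) : ℕ := sInf {n | LeftChain G n}

/-- Right-length: minimum number of consecutive Right moves needed to reach zero. -/
noncomputable def rightLength (G : PGame) : ℕ := sInf {n | RightChain G n}

/-- Normal-play canonical form of a nonnegative integer. -/
def natGame : ℕ → PGame
  | 0 => 0
  | n + 1 => PGame.mk PUnit PEmpty (fun _ => natGame n) PEmpty.elim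

/-- Normal-play canonical form of an integer (negatives are conjugates). -/
def intGame (n : ℤ) : PGame :=
  if 0 ≤ n then natGame n.toNat else -natGame (-n).toNat

/-- Normal-play canonical form of the dyadic rational `m / 2 ^ j`. -/
def dyadicGame : ℤ → ℕ → PGame
  | m, 0 => intGame m
  | m, j + 1 =>
      if m % 2 = 0 then dyadicGame (m / 2) j
      else PGame.mk PUnit PUnit (fun _ => dyadicGame ((m - 1) / 2) j)
            (fun _ => dyadicGame ((m + 1) / 2) j)

/-- The closure of dead ends: finite disjunctive sums of dead ends. -/
def DeadEndClosure : Set PGame :=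
  {G | ∃ l : List PGame, (∀ x ∈ l, DeadEnd x) ∧ G = l.sum}

end Misere

open Misere SetTheory PGame

/-- The universe of normal-play canonical-form integer games. -/
def IntUniv : Set PGame := {G | ∃ n : ℤ, G = intGame n}


namespace SetTheory.PGame

theorem leftMoves_add : ∀ x y : PGame.{u}, (x + y).LeftMoves = (x.LeftMoves ⊕ y.LeftMoves)
  | ⟨_, _, _, _⟩, ⟨_, _, _, _⟩ => rfl

theorem rightMoves_add : ∀ x y : PGame.{u}, (x + y).RightMoves = (x.RightMoves ⊕ y.RightMoves)
  | ⟨_, _, _, _⟩, ⟨_, _, _, _⟩ => rfl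

def toLeftMovesAdd {x y : PGame} : x.LeftMoves ⊕ y.LeftMoves ≃ (x + y).LeftMoves :=
  Equiv.cast (leftMoves_add x y).symm

def toRightMovesAdd {x y : PGame} : x.RightMoves ⊕ y.RightMoves ≃ (x + y).RightMoves :=
  Equiv.cast (rightMoves_add x y).symm

theorem add_moveLeft_inl {x : PGame} (y : PGame) (i) :
    (x + y).moveLeft (toLeftMovesAdd (Sum.inl i)) = x.moveLeft i + y := by
  cases x; cases y; rfl

theorem add_moveLeft_inr (x : PGame) {y : PGame} (i) :
    (x + y).moveLeft (toLeftMovesAdd (Sum.inr i)) = x + y.moveLeft i := by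
  cases x; cases y; rfl

theorem add_moveRight_inl {x : PGame} (y : PGame) (i) :
    (x + y).moveRight (toRightMovesAdd (Sum.inl i)) = x.moveRight i + y := by
  cases x; cases y; rfl

theorem add_moveRight_inr (x : PGame) {y : PGame} (i) :
    (x + y).moveRight (toRightMovesAdd (Sum.inr i)) = x + y.moveRight i := by
  cases x; cases y; rfl

theorem leftMoves_add_cases {x y : PGame} (k) {P : (x + y).LeftMoves → Prop}
    (hl : ∀ i, P <| toLeftMovesAdd (Sum.inl i)) (hr : ∀ i, P <| toLeftMovesAdd (Sum.inr i)) :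
    P k := by
  rw [← toLeftMovesAdd.apply_symm_apply k]
  rcases toLeftMovesAdd.symm k with i | i
  · exact hl i
  · exact hr i

theorem rightMoves_add_cases {x y : PGame} (k) {P : (x + y).RightMoves → Prop}
    (hl : ∀ i, P <| toRightMovesAdd (Sum.inl i)) (hr : ∀ i, P <| toRightMovesAdd (Sum.inr i)) :
    P k := by
  rw [← toRightMovesAdd.apply_symm_apply k]
  rcases toRightMovesAdd.symm k with i | i
  · exact hl i
  · exact hr i

theorem neg_def {xl xr xL xR} : -mk xl xr xL xR = mk xr xl (fun j => -xR j) fun i => -xL i :=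
  rfl

theorem neg_zero : -(0 : PGame) = 0 := by
  show mk _ _ _ _ = mk _ _ _ _
  congr <;> funext i <;> exact i.elim

end SetTheory.PGame

section Aux

set_option linter.unusedVariables false

lemma leftWinsGF_iff' (G : PGame) :
    LeftWinsGF G ↔ (IsEmpty G.LeftMoves ∨ ∃ i, ¬ RightWinsGF (G.moveLeft i)) := by
  cases G; rfl

lemma rightWinsGF_iff' (G : PGame) :
    RightWinsGF G ↔ (IsEmpty G.RightMoves ∨ ∃ j, ¬ LeftWinsGF (G.moveRight j)) := by
  cases G; rfl

/-- `Pile G P Q` : `G` behaves like two independent countdown piles, `P` moves for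
Left and `Q` moves for Right. -/
inductive Pile : PGame → ℕ → ℕ → Prop
  | mk (G : PGame) (P Q : ℕ)
      (hL : IsEmpty G.LeftMoves ↔ P = 0)
      (hR : IsEmpty G.RightMoves ↔ Q = 0)
      (hml : ∀ i, Pile (G.moveLeft i) (P - 1) Q)
      (hmr : ∀ j, Pile (G.moveRight j) P (Q - 1)) : Pile G P Q

lemma pile_wins : ∀ {G P Q}, Pile G P Q →
    (LeftWinsGF G ↔ P ≤ Q) ∧ (RightWinsGF G ↔ Q ≤ P) := by
  intro G P Q h
  induction h with
  | mk G P Q hL hR hml hmr ihl ihr =>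
    constructor
    · rw [leftWinsGF_iff']
      constructor
      · rintro (he | ⟨i, hi⟩)
        · have := hL.mp he; omega
        · have hP : P ≠ 0 := fun h0 => (hL.mpr h0).false i
          have := (ihl i).2
          rw [this] at hi
          omega
      · intro hPQ
        by_cases hP : P = 0
        · exact Or.inl (hL.mpr hP)
        · have : ¬ IsEmpty G.LeftMoves := fun he => hP (hL.mp he)
          rw [not_isEmpty_iff] at this
          obtain ⟨i⟩ := this
          refine Or.inr ⟨i, ?_⟩
          rw [(ihl i).2]
          omega
    · rw [rightWinsGF_iff']
      constructor
      · rintro (he | ⟨j, hj⟩)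
        · have := hR.mp he; omega
        · have hQ : Q ≠ 0 := fun h0 => (hR.mpr h0).false j
          have := (ihr j).1
          rw [this] at hj
          omega
      · intro hQP
        by_cases hQ : Q = 0
        · exact Or.inl (hR.mpr hQ)
        · have : ¬ IsEmpty G.RightMoves := fun he => hQ (hR.mp he)
          rw [not_isEmpty_iff] at this
          obtain ⟨j⟩ := this
          refine Or.inr ⟨j, ?_⟩
          rw [(ihr j).1]
          omega

lemma pile_add : ∀ {G P Q}, Pile G P Q → ∀ {H P' Q'}, Pile H P' Q' →
    Pile (G + H) (P + P') (Q + Q') := by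
  intro G P Q hG
  induction hG with
  | mk G P Q hL hR hml hmr ihl ihr =>
    intro H P' Q' hH
    induction hH with
    | mk H P' Q' hL' hR' hml' hmr' ihl' ihr' =>
      have hHfull : Pile H P' Q' := Pile.mk H P' Q' hL' hR' hml' hmr'
      refine Pile.mk _ _ _ ?_ ?_ ?_ ?_
      · rw [show (G + H).LeftMoves = (G.LeftMoves ⊕ H.LeftMoves) from PGame.leftMoves_add G H,
          isEmpty_sum, hL, hL']
        omega
      · rw [show (G + H).RightMoves = (G.RightMoves ⊕ H.RightMoves) from PGame.rightMoves_add G H,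
          isEmpty_sum, hR, hR']
        omega
      · intro i
        refine PGame.leftMoves_add_cases (P := fun k => Pile ((G + H).moveLeft k) (P + P' - 1) (Q + Q')) i ?_ ?_
        · intro i'
          rw [PGame.add_moveLeft_inl]
          have hP : P ≠ 0 := fun h0 => (hL.mpr h0).false i'
          have := ihl i' hHfull
          rwa [show P - 1 + P' = P + P' - 1 by omega] at this
        · intro i'
          rw [PGame.add_moveLeft_inr]
          have hP : P' ≠ 0 := fun h0 => (hL'.mpr h0).false i'
          have := ihl' i'
          rwa [show P + (P' - 1) = P + P' - 1 by omega] at this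
      · intro j
        refine PGame.rightMoves_add_cases (P := fun k => Pile ((G + H).moveRight k) (P + P') (Q + Q' - 1)) j ?_ ?_
        · intro j'
          rw [PGame.add_moveRight_inl]
          have hQ : Q ≠ 0 := fun h0 => (hR.mpr h0).false j'
          have := ihr j' hHfull
          rwa [show Q - 1 + Q' = Q + Q' - 1 by omega] at this
        · intro j'
          rw [PGame.add_moveRight_inr]
          have hQ : Q' ≠ 0 := fun h0 => (hR'.mpr h0).false j'
          have := ihr' j'
          rwa [show Q + (Q' - 1) = Q + Q' - 1 by omega] at this

lemma intGame_zero' : intGame 0 = PGame.mk PEmpty PEmpty PEmpty.elim PEmpty.elim := rfl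
lemma intGame_nonneg (n : ℤ) (h : 0 ≤ n) : intGame n = natGame n.toNat := if_pos h

lemma intGame_pos (n : ℤ) (h : 0 < n) :
    intGame n = PGame.mk PUnit PEmpty (fun _ => intGame (n - 1)) PEmpty.elim := by
  rw [intGame_nonneg n h.le, show n.toNat = (n-1).toNat + 1 by omega, natGame,
      intGame_nonneg (n-1) (by omega)]

lemma intGame_negative (n : ℤ) (h : n < 0) :
    intGame n = PGame.mk PEmpty PUnit PEmpty.elim (fun _ => intGame (n + 1)) := by
  have h1 : intGame n = -natGame (-n).toNat := if_neg (by omega)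
  rw [h1, show (-n).toNat = (-(n+1)).toNat + 1 by omega, natGame, PGame.neg_def]
  congr 1
  · funext j; exact j.elim
  · funext _
    by_cases h2 : n + 1 < 0
    · rw [intGame, if_neg (by omega)]
    · have h3 : n + 1 = 0 := by omega
      rw [h3]
      show -natGame (-(0:ℤ)).toNat = intGame 0
      rw [show ((-(0:ℤ)).toNat) = 0 from rfl, show natGame 0 = 0 from rfl, neg_zero]
      rfl

lemma pile_intGame : ∀ (k : ℕ) (n : ℤ), n.natAbs = k → Pile (intGame n) n.toNat (-n).toNat := by
  intro k
  induction k using Nat.strong_induction_on with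
  | _ k ih =>
    intro n hn
    rcases lt_trichotomy n 0 with h | h | h
    · rw [intGame_negative n h]
      refine Pile.mk _ _ _ ?_ ?_ ?_ ?_
      · constructor
        · intro _; omega
        · intro _; exact ⟨fun i => PEmpty.elim i⟩
      · constructor
        · intro he; exact absurd (he.false PUnit.unit) (by simp)
        · intro hq; omega
      · intro i; exact i.elim
      · intro j
        have := ih (n+1).natAbs (by omega) (n+1) rfl
        have e1 : n.toNat = (n+1).toNat := by omega
        have e2 : (-n).toNat - 1 = (-(n+1)).toNat := by omega
        rw [e1, e2]
        exact this
    · subst h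
      rw [intGame_zero']
      refine Pile.mk _ _ _ ?_ ?_ ?_ ?_
      · exact iff_of_true ⟨fun i => PEmpty.elim i⟩ rfl
      · exact iff_of_true ⟨fun i => PEmpty.elim i⟩ rfl
      · intro i; exact i.elim
      · intro j; exact j.elim
    · rw [intGame_pos n h]
      refine Pile.mk _ _ _ ?_ ?_ ?_ ?_
      · constructor
        · intro he; exact absurd (he.false PUnit.unit) (by simp)
        · intro hp; omega
      · constructor
        · intro _; omega
        · intro _; exact ⟨fun i => PEmpty.elim i⟩
      · intro i
        have := ih (n-1).natAbs (by omega) (n-1) rfl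
        have e1 : n.toNat - 1 = (n-1).toNat := by omega
        have e2 : (-n).toNat = (-(n-1)).toNat := by omega
        rw [e1, e2]
        exact this
      · intro j; exact j.elim

lemma outcome_pile {G : PGame} {P Q : ℕ} (h : Pile G P Q) :
    outcome G = if P < Q then MOutcome.L else if Q < P then MOutcome.R else MOutcome.N := by
  obtain ⟨hlw, hrw⟩ := pile_wins h
  unfold outcome
  split_ifs with h1 h2 h3 h4 h5 h6 h7 h8 h9 h10 h11 <;>
    first
      | rfl
      | (exfalso; rw [hlw] at *; rw [hrw] at *; omega)

lemma outcome_intGame_add (a b : ℤ) :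
    outcome (intGame a + intGame b) =
      if a + b < 0 then MOutcome.L else if 0 < a + b then MOutcome.R else MOutcome.N := by
  have h := pile_add (pile_intGame _ a rfl) (pile_intGame _ b rfl)
  rw [outcome_pile h]
  split_ifs <;> first | rfl | omega

lemma outcome_intGame_add3 (a b c : ℤ) :
    outcome (intGame a + intGame b + intGame c) =
      if a + b + c < 0 then MOutcome.L else if 0 < a + b + c then MOutcome.R else MOutcome.N := by
  have h := pile_add (pile_add (pile_intGame _ a rfl) (pile_intGame _ b rfl)) (pile_intGame _ c rfl)
  rw [outcome_pile h]
  split_ifs <;> first | rfl | omega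

lemma outcome_intGame' (a : ℤ) :
    outcome (intGame a) =
      if a < 0 then MOutcome.L else if 0 < a then MOutcome.R else MOutcome.N := by
  rw [outcome_pile (pile_intGame _ a rfl)]
  split_ifs <;> first | rfl | omega

lemma mout_le_refl (a : MOutcome) : a ≤ a := by
  show MOutcome.le _ _; cases a <;> first | exact trivial | exact rfl
lemma mout_R_le (b : MOutcome) : MOutcome.R ≤ b := by
  show MOutcome.le _ _; cases b <;> exact trivial
lemma mout_le_L (a : MOutcome) : a ≤ MOutcome.L := by
  show MOutcome.le _ _; cases a <;> exact trivial

end Aux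

/-- the misère monoid of canonical-form integers is isomorphic to (ℤ, +),
with the stated outcome partition and total ordering. -/
theorem stmt10 :
    (∀ n m : ℤ, equivMod IntUniv (intGame n) (intGame m) ↔ n = m) ∧
    (∀ n m : ℤ, equivMod IntUniv (intGame n + intGame m) (intGame (n + m))) ∧
    (outcome (intGame 0) = MOutcome.N) ∧
    (∀ n : ℤ, n < 0 → outcome (intGame n) = MOutcome.L) ∧
    (∀ n : ℤ, 0 < n → outcome (intGame n) = MOutcome.R) ∧
    (∀ n m : ℤ, geMod IntUniv (intGame n) (intGame m) ↔ n ≤ m) := by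
  refine ⟨?_, ?_, ?_, ?_, ?_, ?_⟩
  · intro n m
    constructor
    · intro h
      have h2 := h (intGame (-n)) ⟨-n, rfl⟩
      rw [outcome_intGame_add, outcome_intGame_add] at h2
      split_ifs at h2 <;> first | omega | exact MOutcome.noConfusion h2
    · rintro rfl
      exact fun X _ => rfl
  · intro n m X hX
    obtain ⟨k, rfl⟩ := hX
    rw [outcome_intGame_add3, outcome_intGame_add]
  · rw [outcome_intGame']
    norm_num
  · intro n hn
    rw [outcome_intGame', if_pos hn]
  · intro n hn
    rw [outcome_intGame', if_neg (by omega), if_pos hn]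
  · intro n m
    constructor
    · intro h
      by_contra hmn
      push_neg at hmn
      have h2 := h (intGame (-n)) ⟨-n, rfl⟩
      rw [outcome_intGame_add, outcome_intGame_add] at h2
      rw [if_pos (by omega : m + -n < 0), if_neg (by omega : ¬ n + -n < 0),
          if_neg (by omega : ¬ (0:ℤ) < n + -n)] at h2
      have h3 : MOutcome.le .L .N := h2
      exact MOutcome.noConfusion h3
    · intro hnm X hX
      obtain ⟨k, rfl⟩ := hX
      rw [outcome_intGame_add, outcome_intGame_add]
      split_ifs <;>
        first | omega | exact mout_le_refl _ | exact mout_R_le _ | exact mout_le_L _
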